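/- arXiv:2107.12023 — 6 statements merged into one kernel-verified Lean document; each statement's English description precedes it below -/
import Mathlib

section
/- Let l : [0,1] → ℝ≥0 be continuous, non-decreasing, with left derivative l', and let α : [0,1] → ℝ≥0 be non-increasing. Define the social cost SC(x) = l(x) + ∫_x^1 α(z) dz. If l' is non-decreasing and x̂ ∈ (0,1) satisfies α(x̂⁻) ≥ l'(x̂) ≥ α(x̂⁺) (limits from left and right of α at x̂), then SC(x̂) = min_{x∈[0,1]} SC(x). -/
open Set MeasureTheory

/-- Social cost: `SC(x) = l(x) + ∫_x^1 α(z) dz`. -/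
noncomputable def SC (l α : ℝ → ℝ) (x : ℝ) : ℝ := l x + ∫ z in x..(1:ℝ), α z

/-- Left limit value `α(x⁻) = inf {α(t) | 0 ≤ t < x}` (with convention `α(0⁻) = +∞`). -/
noncomputable def leftLimE (α : ℝ → ℝ) (x : ℝ) : EReal := ⨅ t ∈ Set.Ico (0:ℝ) x, (α t : EReal)

/-- Right limit value `α(x⁺) = sup {α(t) | x < t ≤ 1}` (with convention `α(1⁺) = -∞`). -/
noncomputable def rightLimE (α : ℝ → ℝ) (x : ℝ) : EReal := ⨆ t ∈ Set.Ioc x (1:ℝ), (α t : EReal)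

lemma left_deriv_mvt_le {f f' : ℝ → ℝ} {a b C : ℝ} (hab : a ≤ b)
    (hf : ContinuousOn f (Icc a b))
    (hf' : ∀ t ∈ Ioc a b, HasDerivWithinAt f (f' t) (Iic t) t)
    (hC : ∀ t ∈ Ioc a b, f' t ≤ C) :
    f b - f a ≤ C * (b - a) := by
  set g : ℝ → ℝ := fun t => -f (a + b - t) with hg
  have hg_cont : ContinuousOn g (Icc a b) := by
    apply ContinuousOn.neg
    apply hf.comp (by fun_prop)
    intro t ht
    exact ⟨by linarith [ht.2], by linarith [ht.1]⟩
  have hg' : ∀ t ∈ Ico a b, HasDerivWithinAt g (f' (a + b - t)) (Ici t) t := by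
    intro t ht
    have hc : a + b - t ∈ Ioc a b := ⟨by linarith [ht.2], by linarith [ht.1]⟩
    have hinner : HasDerivWithinAt (fun s => a + b - s) (-1) (Ici t) t := by
      simpa using ((hasDerivWithinAt_id t (Ici t)).const_sub (a + b))
    have hmaps : MapsTo (fun s => a + b - s) (Ici t) (Iic (a + b - t)) :=
      fun s hs => by simp only [mem_Iic]; linarith [mem_Ici.mp hs]
    have := (hf' _ hc).comp t hinner hmaps
    have h2 := this.neg
    rw [mul_neg, mul_one, neg_neg] at h2
    exact h2
  have key := image_le_of_deriv_right_le_deriv_boundary (B := fun t => g a + C * (t - a))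
    (B' := fun _ => C) hg_cont hg' (by simp) (by fun_prop)
    (fun t _ => by
      simpa using ((((hasDerivAt_id t).sub_const a).const_mul C).const_add (g a)).hasDerivWithinAt
        (s := Ici t))
    (fun t ht => hC _ ⟨by linarith [ht.2], by linarith [ht.1]⟩)
  have := key (right_mem_Icc.mpr hab)
  simp only [g] at this
  have h1 : a + b - b = a := by ring
  have h2 : a + b - a = b := by ring
  rw [h1, h2] at this
  nlinarith [this]

lemma left_deriv_mvt_ge {f f' : ℝ → ℝ} {a b C : ℝ} (hab : a ≤ b)
    (hf : ContinuousOn f (Icc a b))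
    (hf' : ∀ t ∈ Ioc a b, HasDerivWithinAt f (f' t) (Iic t) t)
    (hC : ∀ t ∈ Ioc a b, C ≤ f' t) :
    C * (b - a) ≤ f b - f a := by
  have := left_deriv_mvt_le (f := fun t => -f t) (f' := fun t => -f' t) (C := -C) hab
    hf.neg (fun t ht => (hf' t ht).neg) (fun t ht => by simpa using neg_le_neg (hC t ht))
  simp at this
  nlinarith [this]

/-- Pigou: if the externality derivative is non-decreasing, any equilibrium
`xh` of the Pigouvian tax minimizes the social cost. -/
theorem pigou_equilibrium_is_optimal
    (l l' α : ℝ → ℝ)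
    (hl_cont : ContinuousOn l (Icc 0 1))
    (hl_mono : MonotoneOn l (Icc 0 1))
    (hl_nonneg : ∀ x ∈ Icc (0:ℝ) 1, 0 ≤ l x)
    (hl_deriv : ∀ x ∈ Ioc (0:ℝ) 1, HasDerivWithinAt l (l' x) (Iic x) x)
    (hl'_mono : MonotoneOn l' (Icc 0 1))
    (hα_anti : AntitoneOn α (Icc 0 1))
    (hα_nonneg : ∀ x ∈ Icc (0:ℝ) 1, 0 ≤ α x)
    (xh : ℝ) (hxh : xh ∈ Ioo (0:ℝ) 1)
    (heq_left : (l' xh : EReal) ≤ leftLimE α xh)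
    (heq_right : rightLimE α xh ≤ (l' xh : EReal)) :
    ∀ x ∈ Icc (0:ℝ) 1, SC l α xh ≤ SC l α x := by
  have hxh01 : xh ∈ Icc (0:ℝ) 1 := ⟨hxh.1.le, hxh.2.le⟩
  -- scalar versions of the equilibrium conditions
  have hge : ∀ t ∈ Ico (0:ℝ) xh, l' xh ≤ α t := by
    intro t ht
    have h1 : leftLimE α xh ≤ (α t : EReal) := by
      unfold leftLimE
      exact biInf_le (fun t => (α t : EReal)) ht
    exact_mod_cast heq_left.trans h1
  have hle : ∀ t ∈ Ioc xh (1:ℝ), α t ≤ l' xh := by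
    intro t ht
    have h1 : (α t : EReal) ≤ rightLimE α xh := by
      unfold rightLimE
      exact le_biSup (fun t => (α t : EReal)) ht
    exact_mod_cast h1.trans heq_right
  -- integrability
  have hint : ∀ a b : ℝ, a ∈ Icc (0:ℝ) 1 → b ∈ Icc (0:ℝ) 1 →
      IntervalIntegrable α volume a b := by
    intro a b ha hb
    refine AntitoneOn.intervalIntegrable (hα_anti.mono ?_)
    exact uIcc_subset_Icc ha hb
  have hne : ∀ᵐ z : ℝ ∂volume, z ≠ xh := by
    rw [ae_iff]
    simp only [not_not, Set.setOf_eq_eq_singleton]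
    exact Real.volume_singleton
  intro x hx
  rcases le_total x xh with hxle | hxle
  · -- x ≤ xh
    have hsplit := intervalIntegral.integral_add_adjacent_intervals
      (hint x xh hx hxh01) (hint xh 1 hxh01 (by norm_num))
    have hmvt : l xh - l x ≤ l' xh * (xh - x) := by
      apply left_deriv_mvt_le hxle (hl_cont.mono (Icc_subset_Icc hx.1 hxh01.2))
      · intro t ht
        exact hl_deriv t ⟨lt_of_le_of_lt hx.1 ht.1, le_trans ht.2 hxh01.2⟩
      · intro t ht
        exact hl'_mono ⟨le_trans hx.1 ht.1.le, le_trans ht.2 hxh01.2⟩ hxh01 ht.2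
    have hintle : l' xh * (xh - x) ≤ ∫ z in x..xh, α z := by
      have hae : ∀ᵐ z ∂volume.restrict (Icc x xh), l' xh ≤ α z := by
        filter_upwards [ae_restrict_of_ae hne, ae_restrict_mem measurableSet_Icc]
          with z hz1 hz2
        exact hge z ⟨le_trans hx.1 hz2.1, lt_of_le_of_ne hz2.2 hz1⟩
      have := intervalIntegral.integral_mono_ae_restrict hxle
        (intervalIntegrable_const) (hint x xh hx hxh01) hae
      simpa [mul_comm] using this
    unfold SC
    linarith
  · -- xh ≤ x
    have hsplit := intervalIntegral.integral_add_adjacent_intervals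
      (hint xh x hxh01 hx) (hint x 1 hx (by norm_num))
    have hmvt : l' xh * (x - xh) ≤ l x - l xh := by
      apply left_deriv_mvt_ge hxle (hl_cont.mono (Icc_subset_Icc hxh01.1 hx.2))
      · intro t ht
        exact hl_deriv t ⟨lt_of_le_of_lt hxh01.1 ht.1, le_trans ht.2 hx.2⟩
      · intro t ht
        exact hl'_mono hxh01 ⟨le_trans hxh01.1 ht.1.le, le_trans ht.2 hx.2⟩ ht.1.le
    have hintle : (∫ z in xh..x, α z) ≤ l' xh * (x - xh) := by
      have hae : ∀ᵐ z ∂volume.restrict (Icc xh x), α z ≤ l' xh := by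
        filter_upwards [ae_restrict_of_ae hne, ae_restrict_mem measurableSet_Icc]
          with z hz1 hz2
        exact hle z ⟨lt_of_le_of_ne hz2.1 (Ne.symm hz1), le_trans hz2.2 hx.2⟩
      have := intervalIntegral.integral_mono_ae_restrict hxle
        (hint xh x hxh01 hx) (intervalIntegrable_const) hae
      simpa [mul_comm] using this
    unfold SC
    linarith
end

section
/- Let γ ≥ 1, let l : [0,1] → ℝ≥0 be non-decreasing and continuous with left derivative l', and suppose there is a non-decreasing integrable function L' : [0,1] → ℝ>0 with 1 ≤ l'(x)/L'(x) ≤ γ for all x ∈ [0,1]. Set the tax t(x) = L'(x), and SC(x) = l(0) + ∫_0^x l'(z) dz + ∫_x^1 α(z) dz for any non-increasing α : [0,1] → ℝ≥0. Then for every equilibrium point x̂ (i.e., α(x̂⁻) ≥ L'(x̂) ≥ α(x̂⁺)) and every x* minimizing SC, we have SC(x̂) ≤ γ · SC(x*). -/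
open Set MeasureTheory Filter Topology

/-- Social cost via the derivative form: `SC(x) = l(0) + ∫_0^x l' + ∫_x^1 α`. -/
noncomputable def SCd (l0 : ℝ) (l' α : ℝ → ℝ) (x : ℝ) : ℝ :=
  l0 + (∫ z in (0:ℝ)..x, l' z) + ∫ z in x..(1:ℝ), α z

/-- If `l'` is `γ`-approximately weakly increasing with `L'`, then under the tax
`t = L'` every equilibrium has social cost at most `γ` times the optimum. -/
theorem gamma_approx_increasing_poa
    (γ : ℝ) (hγ : 1 ≤ γ)
    (l l' L' α : ℝ → ℝ)
    (hl_mono : MonotoneOn l (Icc 0 1))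
    (hl_cont : ContinuousOn l (Icc 0 1))
    (hl_nonneg : ∀ x ∈ Icc (0:ℝ) 1, 0 ≤ l x)
    (hl_deriv : ∀ x ∈ Ioc (0:ℝ) 1, HasDerivWithinAt l (l' x) (Iic x) x)
    (hL'_mono : MonotoneOn L' (Icc 0 1))
    (hL'_pos : ∀ x ∈ Icc (0:ℝ) 1, 0 < L' x)
    (hL'_int : IntervalIntegrable L' volume 0 1)
    (hratio : ∀ x ∈ Icc (0:ℝ) 1, 1 ≤ l' x / L' x ∧ l' x / L' x ≤ γ)
    (hα_anti : AntitoneOn α (Icc 0 1))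
    (hα_nonneg : ∀ x ∈ Icc (0:ℝ) 1, 0 ≤ α x)
    (xh : ℝ) (hxh : xh ∈ Icc (0:ℝ) 1)
    (heq_left : (L' xh : EReal) ≤ leftLimE α xh)
    (heq_right : rightLimE α xh ≤ (L' xh : EReal))
    (xstar : ℝ) (hxstar : xstar ∈ Icc (0:ℝ) 1)
    (hxstar_min : ∀ x ∈ Icc (0:ℝ) 1, SCd (l 0) l' α xstar ≤ SCd (l 0) l' α x) :
    SCd (l 0) l' α xh ≤ γ * SCd (l 0) l' α xstar := by
  have h01 : (0:ℝ) ≤ 1 := zero_le_one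
  have hγ0 : (0:ℝ) ≤ γ := le_trans zero_le_one hγ
  have hl0 : 0 ≤ l 0 := hl_nonneg 0 ⟨le_refl 0, h01⟩
  -- pointwise bounds on l'
  have hl'_lb : ∀ x ∈ Icc (0:ℝ) 1, L' x ≤ l' x := by
    intro x hx
    have h1 := (hratio x hx).1
    have h2 := hL'_pos x hx
    rw [le_div_iff₀ h2] at h1; linarith
  have hl'_ub : ∀ x ∈ Icc (0:ℝ) 1, l' x ≤ γ * L' x := by
    intro x hx
    have h1 := (hratio x hx).2
    have h2 := hL'_pos x hx
    rw [div_le_iff₀ h2] at h1; linarith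
  have hl'_pos : ∀ x ∈ Icc (0:ℝ) 1, 0 < l' x :=
    fun x hx => lt_of_lt_of_le (hL'_pos x hx) (hl'_lb x hx)
  -- continuous extension of l
  set lc : ℝ → ℝ := IccExtend h01 ((Icc (0:ℝ) 1).restrict l) with hlc_def
  have hlc_cont : Continuous lc :=
    (continuousOn_iff_continuous_restrict.mp hl_cont).Icc_extend'
  have hlc_eq : ∀ x ∈ Icc (0:ℝ) 1, lc x = l x := by
    intro x hx
    simp [hlc_def, IccExtend_of_mem h01 _ hx]; rfl
  have hlc_deriv : ∀ x ∈ Ioc (0:ℝ) 1, HasDerivWithinAt lc (l' x) (Iic x) x := by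
    intro x hx
    apply (hl_deriv x hx).congr_of_eventuallyEq ?_ (hlc_eq x ⟨hx.1.le, hx.2⟩)
    have hmem : Ioc (0:ℝ) x ∈ 𝓝[Iic x] x := by
      rw [mem_nhdsWithin]
      exact ⟨Ioi 0, isOpen_Ioi, hx.1, fun z hz => ⟨hz.1, hz.2⟩⟩
    filter_upwards [hmem] with z hz
    exact hlc_eq z ⟨hz.1.le, hz.2.trans hx.2⟩
  -- a.e. measurability of l' on (0,1]
  have hmeas : AEMeasurable l' (volume.restrict (Ioc (0:ℝ) 1)) := by
    apply aemeasurable_of_tendsto_metrizable_ae'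
      (f := fun (n : ℕ) (x : ℝ) => slope lc x (x - 1/(n+1)))
    · intro n
      have heq : (fun x : ℝ => slope lc x (x - 1/(n+1))) =
          fun x : ℝ => (lc (x - 1/(n+1)) - lc x) / (x - 1/(n+1) - x) := by
        funext x; rw [slope_def_field]
      rw [heq]
      exact (((hlc_cont.comp (by continuity)).sub hlc_cont).measurable.div
        (by measurability)).aemeasurable
    · rw [ae_restrict_iff' measurableSet_Ioc]
      filter_upwards with x hx
      have hd := hlc_deriv x hx
      rw [hasDerivWithinAt_iff_tendsto_slope] at hd
      have hseq : Tendsto (fun n : ℕ => x - 1/(n+1)) atTop (𝓝[Iic x \ {x}] x) := by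
        apply tendsto_nhdsWithin_of_tendsto_nhds_of_eventually_within
        · have h1 : Tendsto (fun n : ℕ => 1/((n:ℝ)+1)) atTop (𝓝 0) :=
            tendsto_one_div_add_atTop_nhds_zero_nat
          have := tendsto_const_nhds.sub h1 (f := fun _ : ℕ => x)
          simpa using this
        · filter_upwards with n
          have hpos : (0:ℝ) < 1/((n:ℝ)+1) := by positivity
          constructor
          · exact mem_Iic.mpr (by linarith)
          · simp only [mem_singleton_iff]
            intro h; linarith [sub_eq_self.mp h]
      exact hd.comp hseq
  -- integrability of l' on subintervals of [0,1]
  have hIoc01 : IntegrableOn l' (Ioc (0:ℝ) 1) := by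
    have hbound : ∀ᵐ x ∂(volume.restrict (Ioc (0:ℝ) 1)), ‖l' x‖ ≤ γ * L' 1 := by
      rw [ae_restrict_iff' measurableSet_Ioc]
      filter_upwards with x hx
      have hx' : x ∈ Icc (0:ℝ) 1 := ⟨hx.1.le, hx.2⟩
      rw [Real.norm_eq_abs, abs_of_pos (hl'_pos x hx')]
      calc l' x ≤ γ * L' x := hl'_ub x hx'
        _ ≤ γ * L' 1 := by
            have := hL'_mono hx' (right_mem_Icc.mpr h01) hx.2
            exact mul_le_mul_of_nonneg_left this hγ0
    exact Integrable.mono' ((integrableOn_const_iff (C := γ * L' 1)).mpr (Or.inr measure_Ioc_lt_top))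
      hmeas.aestronglyMeasurable hbound
  have hl'_int : ∀ a b : ℝ, 0 ≤ a → a ≤ b → b ≤ 1 → IntervalIntegrable l' volume a b := by
    intro a b ha hab hb1
    rw [intervalIntegrable_iff_integrableOn_Ioc_of_le hab]
    exact hIoc01.mono_set (Ioc_subset_Ioc ha hb1)
  have hα_int : ∀ a b : ℝ, 0 ≤ a → a ≤ b → b ≤ 1 → IntervalIntegrable α volume a b := by
    intro a b ha hab hb1
    exact (hα_anti.mono (by rw [uIcc_of_le hab]; exact Icc_subset_Icc ha hb1)).intervalIntegrable
  -- equilibrium pointwise inequalities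
  have hα_ge : ∀ z ∈ Ico (0:ℝ) xh, L' xh ≤ α z := by
    intro z hz
    have h1 : leftLimE α xh ≤ (α z : EReal) := by
      unfold leftLimE
      exact iInf₂_le z hz
    have := le_trans heq_left h1
    exact_mod_cast this
  have hα_le : ∀ z ∈ Ioc xh (1:ℝ), α z ≤ L' xh := by
    intro z hz
    have h1 : (α z : EReal) ≤ rightLimE α xh := by
      unfold rightLimE
      exact le_iSup₂ (f := fun t (_ : t ∈ Ioc xh (1:ℝ)) => (α t : EReal)) z hz
    have := le_trans h1 heq_right
    exact_mod_cast this
  -- nonnegativity of integrals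
  have hint_l'_nonneg : ∀ a b : ℝ, 0 ≤ a → a ≤ b → b ≤ 1 → 0 ≤ ∫ z in a..b, l' z := by
    intro a b ha hab hb1
    exact intervalIntegral.integral_nonneg hab
      (fun u hu => (hl'_pos u ⟨ha.trans hu.1, hu.2.trans hb1⟩).le)
  have hint_α_nonneg : ∀ a b : ℝ, 0 ≤ a → a ≤ b → b ≤ 1 → 0 ≤ ∫ z in a..b, α z := by
    intro a b ha hab hb1
    exact intervalIntegral.integral_nonneg hab
      (fun u hu => hα_nonneg u ⟨ha.trans hu.1, hu.2.trans hb1⟩)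
  have hSC_star_nonneg : 0 ≤ SCd (l 0) l' α xstar := by
    unfold SCd
    have h1 := hint_l'_nonneg 0 xstar le_rfl hxstar.1 hxstar.2
    have h2 := hint_α_nonneg xstar 1 hxstar.1 hxstar.2 le_rfl
    linarith
  rcases le_or_gt xh xstar with hcase | hcase
  · -- xh ≤ xstar : show SC(xh) ≤ SC(xstar)
    have hsplit_l : ∫ z in (0:ℝ)..xstar, l' z =
        (∫ z in (0:ℝ)..xh, l' z) + ∫ z in xh..xstar, l' z :=
      (intervalIntegral.integral_add_adjacent_intervals
        (hl'_int 0 xh le_rfl hxh.1 hxh.2)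
        (hl'_int xh xstar hxh.1 hcase hxstar.2)).symm
    have hsplit_a : ∫ z in xh..(1:ℝ), α z =
        (∫ z in xh..xstar, α z) + ∫ z in xstar..(1:ℝ), α z :=
      (intervalIntegral.integral_add_adjacent_intervals
        (hα_int xh xstar hxh.1 hcase hxstar.2)
        (hα_int xstar 1 hxstar.1 hxstar.2 le_rfl)).symm
    have hkey : ∫ z in xh..xstar, α z ≤ ∫ z in xh..xstar, l' z := by
      rw [intervalIntegral.integral_of_le hcase, intervalIntegral.integral_of_le hcase]
      apply setIntegral_mono_on
      · exact ((hα_int xh xstar hxh.1 hcase hxstar.2).1)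
      · exact ((hl'_int xh xstar hxh.1 hcase hxstar.2).1)
      · exact measurableSet_Ioc
      · intro z hz
        have hz1 : z ∈ Ioc xh (1:ℝ) := ⟨hz.1, hz.2.trans hxstar.2⟩
        have hzI : z ∈ Icc (0:ℝ) 1 := ⟨hxh.1.trans hz.1.le, hz1.2⟩
        calc α z ≤ L' xh := hα_le z hz1
          _ ≤ L' z := hL'_mono hxh hzI hz.1.le
          _ ≤ l' z := hl'_lb z hzI
    have hle : SCd (l 0) l' α xh ≤ SCd (l 0) l' α xstar := by
      unfold SCd
      rw [hsplit_l, hsplit_a]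
      linarith
    calc SCd (l 0) l' α xh ≤ SCd (l 0) l' α xstar := hle
      _ ≤ γ * SCd (l 0) l' α xstar := le_mul_of_one_le_left hSC_star_nonneg hγ
  · -- xstar < xh
    have hcase' : xstar ≤ xh := hcase.le
    have hsplit_l : ∫ z in (0:ℝ)..xh, l' z =
        (∫ z in (0:ℝ)..xstar, l' z) + ∫ z in xstar..xh, l' z :=
      (intervalIntegral.integral_add_adjacent_intervals
        (hl'_int 0 xstar le_rfl hxstar.1 hxstar.2)
        (hl'_int xstar xh hxstar.1 hcase' hxh.2)).symm
    have hsplit_a : ∫ z in xstar..(1:ℝ), α z =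
        (∫ z in xstar..xh, α z) + ∫ z in xh..(1:ℝ), α z :=
      (intervalIntegral.integral_add_adjacent_intervals
        (hα_int xstar xh hxstar.1 hcase' hxh.2)
        (hα_int xh 1 hxh.1 hxh.2 le_rfl)).symm
    have hkey : ∫ z in xstar..xh, l' z ≤ γ * ∫ z in xstar..xh, α z := by
      have h1 : ∫ z in xstar..xh, l' z ≤ ∫ z in xstar..xh, γ * α z := by
        rw [intervalIntegral.integral_of_le hcase', intervalIntegral.integral_of_le hcase',
          integral_Ioc_eq_integral_Ioo, integral_Ioc_eq_integral_Ioo]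
        apply setIntegral_mono_on
        · exact ((hl'_int xstar xh hxstar.1 hcase' hxh.2).1).mono_set Ioo_subset_Ioc_self
        · exact (((hα_int xstar xh hxstar.1 hcase' hxh.2).1).mono_set
            Ioo_subset_Ioc_self).const_mul γ
        · exact measurableSet_Ioo
        · intro z hz
          have hz0 : (0:ℝ) ≤ z := hxstar.1.trans hz.1.le
          have hzI : z ∈ Icc (0:ℝ) 1 := ⟨hz0, hz.2.le.trans hxh.2⟩
          calc l' z ≤ γ * L' z := hl'_ub z hzI
            _ ≤ γ * L' xh := mul_le_mul_of_nonneg_left (hL'_mono hzI hxh hz.2.le) hγ0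
            _ ≤ γ * α z := mul_le_mul_of_nonneg_left (hα_ge z ⟨hz0, hz.2⟩) hγ0
      rwa [intervalIntegral.integral_const_mul] at h1
    have hA := hint_l'_nonneg 0 xstar le_rfl hxstar.1 hxstar.2
    have hC := hint_α_nonneg xh 1 hxh.1 hxh.2 le_rfl
    have e1 : 0 ≤ (γ - 1) * l 0 := mul_nonneg (by linarith) hl0
    have e2 : 0 ≤ (γ - 1) * ∫ z in (0:ℝ)..xstar, l' z := mul_nonneg (by linarith) hA
    have e3 : 0 ≤ (γ - 1) * ∫ z in xh..(1:ℝ), α z := mul_nonneg (by linarith) hC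
    unfold SCd
    rw [hsplit_l, hsplit_a]
    nlinarith [hkey, e1, e2, e3]
end

section
/- Subsidies do not help: fix a Public-Good Congestion Game with externality l and a continuous tax function t : [0,1] → ℝ (possibly negative). Define t̃(x) = max(t(x), 0). Then for every non-increasing α : [0,1] → ℝ≥0 and every point x̄ that is an equilibrium under t̃ (α(x̄⁻) ≥ t̃(x̄) ≥ α(x̄⁺)), there exists a point x ≥ x̄ that is an equilibrium under t (α(x⁻) ≥ t(x) ≥ α(x⁺)) with SC(x) ≥ SC(x̄). Consequently PoA(l, α, t̃) ≤ PoA(l, α, t). -/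
open Set MeasureTheory

/-- Subsidies do not help: replacing a (possibly negative) continuous tax `t`
by `t̃ = max(t, 0)`, every equilibrium of `t̃` is dominated in social cost by
some equilibrium of `t`. -/
theorem subsidies_do_not_help
    (l : ℝ → ℝ)
    (hl_mono : MonotoneOn l (Icc 0 1))
    (hl_cont : ContinuousOn l (Icc 0 1))
    (hl_nonneg : ∀ x ∈ Icc (0:ℝ) 1, 0 ≤ l x)
    (t : ℝ → ℝ) (ht_cont : ContinuousOn t (Icc 0 1))
    (tt : ℝ → ℝ) (htt : ∀ x, tt x = max (t x) 0)
    (α : ℝ → ℝ)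
    (hα_anti : AntitoneOn α (Icc 0 1))
    (hα_nonneg : ∀ x ∈ Icc (0:ℝ) 1, 0 ≤ α x)
    (xb : ℝ) (hxb : xb ∈ Icc (0:ℝ) 1)
    (heq_left : (tt xb : EReal) ≤ leftLimE α xb)
    (heq_right : rightLimE α xb ≤ (tt xb : EReal)) :
    ∃ x ∈ Icc (0:ℝ) 1, xb ≤ x ∧
      ((t x : EReal) ≤ leftLimE α x ∧ rightLimE α x ≤ (t x : EReal)) ∧
      SC l α xb ≤ SC l α x := by
  have hx0 : (0:ℝ) ≤ xb := hxb.1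
  have hx1 : xb ≤ 1 := hxb.2
  have hleft_nonneg : ∀ x ∈ Icc (0:ℝ) 1, (0:EReal) ≤ leftLimE α x := by
    intro x hx
    refine le_iInf₂ fun s hs => ?_
    have : (0:ℝ) ≤ α s := hα_nonneg s ⟨hs.1, le_of_lt (lt_of_lt_of_le hs.2 hx.2)⟩
    exact_mod_cast this
  by_cases hpos : 0 < t xb
  · refine ⟨xb, hxb, le_refl _, ?_, le_refl _⟩
    have h : tt xb = t xb := by rw [htt]; exact max_eq_left hpos.le
    rw [← h]; exact ⟨heq_left, heq_right⟩
  · push_neg at hpos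
    have httxb : tt xb = 0 := by rw [htt]; exact max_eq_right hpos
    have hα0 : ∀ z ∈ Ioc xb 1, α z = 0 := by
      intro z hz
      have hz1 : z ∈ Icc (0:ℝ) 1 := ⟨le_trans hx0 hz.1.le, hz.2⟩
      refine le_antisymm ?_ (hα_nonneg z hz1)
      have h1 : (α z : EReal) ≤ rightLimE α xb :=
        le_iSup₂ (f := fun z _ => (α z : EReal)) z hz
      have h2 := le_trans h1 heq_right
      rw [httxb] at h2
      exact_mod_cast h2
    have hint : ∀ x ∈ Icc xb 1, (∫ z in x..(1:ℝ), α z) = 0 := by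
      intro x hx
      rw [intervalIntegral.integral_of_le hx.2]
      apply MeasureTheory.setIntegral_eq_zero_of_forall_eq_zero
      intro z hz
      exact hα0 z ⟨lt_of_le_of_lt hx.1 hz.1, hz.2⟩
    have hSC : ∀ x ∈ Icc xb 1, SC l α xb ≤ SC l α x := by
      intro x hx
      have hxmem : x ∈ Icc (0:ℝ) 1 := ⟨le_trans hx0 hx.1, hx.2⟩
      unfold SC
      rw [hint xb ⟨le_refl _, hx1⟩, hint x hx]
      exact add_le_add_left (hl_mono hxb hxmem hx.1) 0
    by_cases hy : ∃ y ∈ Icc xb 1, 0 < t y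
    · obtain ⟨y, hy, hty⟩ := hy
      have hsub : Icc xb y ⊆ Icc (0:ℝ) 1 :=
        Icc_subset_Icc hx0 hy.2
      have hiv := intermediate_value_Icc hy.1 (ht_cont.mono hsub)
      have h0mem : (0:ℝ) ∈ Icc (t xb) (t y) := ⟨hpos, hty.le⟩
      obtain ⟨x, hxmem, htx⟩ := hiv h0mem
      have hx01 : x ∈ Icc (0:ℝ) 1 := hsub hxmem
      refine ⟨x, hx01, hxmem.1, ⟨?_, ?_⟩, hSC x ⟨hxmem.1, hx01.2⟩⟩
      · rw [htx]; exact_mod_cast hleft_nonneg x hx01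
      · refine iSup₂_le fun z hz => ?_
        have : α z = 0 := hα0 z ⟨lt_of_le_of_lt hxmem.1 hz.1, hz.2⟩
        rw [htx, this]
    · push_neg at hy
      have ht1 : t 1 ≤ 0 := hy 1 ⟨hx1, le_refl _⟩
      refine ⟨1, ⟨zero_le_one, le_refl _⟩, hx1, ⟨?_, ?_⟩, hSC 1 ⟨hx1, le_refl _⟩⟩
      · calc (t 1 : EReal) ≤ (0:ℝ) := by exact_mod_cast ht1
          _ ≤ leftLimE α 1 := by exact_mod_cast hleft_nonneg 1 ⟨zero_le_one, le_refl _⟩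
      · refine iSup₂_le fun z hz => absurd hz ?_
        simp
end

section
/- Ride sharing Pigou theorem: fix κ, τ ∈ [0,1) and κ(x) = (1-κ)x + κ. Let l : [0,1] → ℝ≥0 be continuous, non-decreasing with non-decreasing left derivative l', and α non-increasing, non-negative. Set the toll t(x) = ((1-κ)/(1-τ))·l'(x) and SC(x) = l(κ(x)) + ∫_x^1 α(z) dz. Then every equilibrium x̂ (i.e., α(x̂⁻) ≥ (1-κ)·l'(κ(x̂)) ≥ α(x̂⁺)) minimizes SC over [0,1]. -/
open Set MeasureTheory

/-- Road load with ride-sharing technology parameter `κ`: `κ(x) = (1-κ)x + κ`. -/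
def kload (κ x : ℝ) : ℝ := (1 - κ) * x + κ

/-- Ride-sharing social cost: `SC(x) = l(κ(x)) + ∫_x^1 α(z) dz`. -/
noncomputable def SCrs (κ : ℝ) (l α : ℝ → ℝ) (x : ℝ) : ℝ :=
  l (kload κ x) + ∫ z in x..(1:ℝ), α z

/-- A continuous function on `[a,b]` with nonnegative left derivative on `(a,b]` satisfies
`f a ≤ f b`. -/
lemma le_of_left_deriv_nonneg {f f' : ℝ → ℝ} {a b : ℝ} (hab : a ≤ b)
    (hc : ContinuousOn f (Icc a b))
    (hd : ∀ x ∈ Ioc a b, HasDerivWithinAt f (f' x) (Iic x) x)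
    (h0 : ∀ x ∈ Ioc a b, 0 ≤ f' x) : f a ≤ f b := by
  set g : ℝ → ℝ := fun y => f (a + b - y) with hg
  have hmap : MapsTo (fun y => a + b - y) (Icc a b) (Icc a b) := by
    intro y hy
    simp only [mem_Icc] at hy ⊢
    constructor <;> linarith
  have hgc : ContinuousOn g (Icc a b) :=
    hc.comp ((continuous_const.sub continuous_id).continuousOn) hmap
  have hg' : ∀ y ∈ Ico a b, HasDerivWithinAt g (f' (a + b - y) * (-1)) (Ici y) y := by
    intro y hy
    have h1 : HasDerivWithinAt (fun y : ℝ => a + b - y) (-1) (Ici y) y := by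
      have h0' := ((hasDerivAt_const y (a+b)).sub (hasDerivAt_id' y)).hasDerivWithinAt (s := Ici y)
      rw [zero_sub] at h0'
      exact h0'
    have hmem : a + b - y ∈ Ioc a b := ⟨by linarith [hy.2], by linarith [hy.1]⟩
    have hmap2 : MapsTo (fun z : ℝ => a + b - z) (Ici y) (Iic (a + b - y)) :=
      fun z hz => by simp only [mem_Iic]; have : y ≤ z := hz; linarith
    exact (hd _ hmem).comp y h1 hmap2
  have key : ∀ ⦃x⦄, x ∈ Icc a b → g x ≤ f b := by
    refine image_le_of_deriv_right_le_deriv_boundary hgc hg'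
      (B := fun _ => f b) (B' := fun _ => 0) ?_ continuousOn_const
      (fun x _ => hasDerivWithinAt_const x _ _) ?_
    · simp [hg]
    · intro x hx
      have hmem : a + b - x ∈ Ioc a b := ⟨by linarith [hx.2], by linarith [hx.1]⟩
      have := h0 _ hmem
      nlinarith
  have := key (right_mem_Icc.2 hab)
  simpa [hg] using this

/-- Ride-sharing Pigou theorem: with non-decreasing latency derivative, the toll
`t = ((1-κ)/(1-τ))·l'` makes every equilibrium socially optimal. -/
theorem ride_sharing_pigou
    (κ τ : ℝ) (hκ : κ ∈ Ico (0:ℝ) 1) (hτ : τ ∈ Ico (0:ℝ) 1)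
    (l l' α : ℝ → ℝ)
    (hl_cont : ContinuousOn l (Icc 0 1))
    (hl_mono : MonotoneOn l (Icc 0 1))
    (hl_nonneg : ∀ x ∈ Icc (0:ℝ) 1, 0 ≤ l x)
    (hl_deriv : ∀ x ∈ Ioc (0:ℝ) 1, HasDerivWithinAt l (l' x) (Iic x) x)
    (hl'_mono : MonotoneOn l' (Icc 0 1))
    (hα_anti : AntitoneOn α (Icc 0 1))
    (hα_nonneg : ∀ x ∈ Icc (0:ℝ) 1, 0 ≤ α x)
    (t : ℝ → ℝ) (ht : ∀ x, t x = ((1 - κ) / (1 - τ)) * l' x)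
    (xh : ℝ) (hxh : xh ∈ Icc (0:ℝ) 1)
    (heq_left : (((1 - τ) * t (kload κ xh) : ℝ) : EReal) ≤ leftLimE α xh)
    (heq_right : rightLimE α xh ≤ (((1 - τ) * t (kload κ xh) : ℝ) : EReal)) :
    ∀ x ∈ Icc (0:ℝ) 1, SCrs κ l α xh ≤ SCrs κ l α x := by
  obtain ⟨hκ0, hκ1⟩ := hκ
  obtain ⟨hτ0, hτ1⟩ := hτ
  obtain ⟨hxh0, hxh1⟩ := hxh
  have hτne : (1:ℝ) - τ ≠ 0 := by linarith
  set c : ℝ := (1 - κ) * l' (kload κ xh) with hcdef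
  have hct : (1 - τ) * t (kload κ xh) = c := by
    rw [ht]; field_simp; exact hcdef.symm
  rw [hct] at heq_left heq_right
  -- equilibrium conditions pointwise
  have hleft : ∀ s ∈ Ico (0:ℝ) xh, c ≤ α s := by
    intro s hs
    have h1 : leftLimE α xh ≤ (α s : EReal) := iInf₂_le s hs
    exact_mod_cast le_trans heq_left h1
  have hright : ∀ s ∈ Ioc xh (1:ℝ), α s ≤ c := by
    intro s hs
    have h1 : (α s : EReal) ≤ rightLimE α xh := le_iSup₂ (f := fun t (_ : t ∈ Ioc xh (1:ℝ)) => (α t : EReal)) s hs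
    exact_mod_cast le_trans h1 heq_right
  -- integrability of α
  have hαint : IntegrableOn α (Icc 0 1) volume :=
    AntitoneOn.integrableOn_isCompact isCompact_Icc hα_anti
  have hαii : ∀ a b : ℝ, a ∈ Icc (0:ℝ) 1 → b ∈ Icc (0:ℝ) 1 →
      IntervalIntegrable α volume a b := by
    intro a b ha hb
    apply IntegrableOn.intervalIntegrable
    exact hαint.mono_set (uIcc_subset_Icc ha hb)
  -- kload facts
  have hk : ∀ y ∈ Icc (0:ℝ) 1, kload κ y ∈ Icc (0:ℝ) 1 := by
    intro y hy
    simp only [kload, mem_Icc] at hy ⊢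
    constructor <;> nlinarith
  have hkm : ∀ {u v : ℝ}, u ≤ v → kload κ u ≤ kload κ v := by
    intro u v h
    simp only [kload]
    nlinarith
  -- lower and upper secant bounds from the monotone left derivative
  have hlow : ∀ a b : ℝ, a ∈ Icc (0:ℝ) 1 → b ∈ Icc (0:ℝ) 1 → a ≤ b →
      l' a * (b - a) ≤ l b - l a := by
    intro a b ha hb hab
    have key := le_of_left_deriv_nonneg (f := fun y => l y - l' a * y)
      (f' := fun y => l' y - l' a) hab
      ((hl_cont.mono (Icc_subset_Icc ha.1 hb.2)).sub
        ((continuous_const.mul continuous_id).continuousOn))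
      (fun y hy => by
        have hy01 : y ∈ Ioc (0:ℝ) 1 := ⟨lt_of_le_of_lt ha.1 hy.1, le_trans hy.2 hb.2⟩
        have h2 : HasDerivWithinAt (fun y : ℝ => l' a * y) (l' a) (Iic y) y := by
          simpa using ((hasDerivAt_id y).const_mul (l' a)).hasDerivWithinAt (s := Iic y)
        exact (hl_deriv y hy01).sub h2)
      (fun y hy => by
        have hy01 : y ∈ Icc (0:ℝ) 1 := ⟨le_trans ha.1 hy.1.le, le_trans hy.2 hb.2⟩
        have := hl'_mono ha hy01 hy.1.le
        linarith)
    linarith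
  have hhigh : ∀ a b : ℝ, a ∈ Icc (0:ℝ) 1 → b ∈ Icc (0:ℝ) 1 → a ≤ b →
      l b - l a ≤ l' b * (b - a) := by
    intro a b ha hb hab
    have key := le_of_left_deriv_nonneg (f := fun y => l' b * y - l y)
      (f' := fun y => l' b - l' y) hab
      (((continuous_const.mul continuous_id).continuousOn).sub
        (hl_cont.mono (Icc_subset_Icc ha.1 hb.2)))
      (fun y hy => by
        have hy01 : y ∈ Ioc (0:ℝ) 1 := ⟨lt_of_le_of_lt ha.1 hy.1, le_trans hy.2 hb.2⟩
        have h2 : HasDerivWithinAt (fun y : ℝ => l' b * y) (l' b) (Iic y) y := by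
          simpa using ((hasDerivAt_id y).const_mul (l' b)).hasDerivWithinAt (s := Iic y)
        exact h2.sub (hl_deriv y hy01))
      (fun y hy => by
        have hy01 : y ∈ Icc (0:ℝ) 1 := ⟨le_trans ha.1 hy.1.le, le_trans hy.2 hb.2⟩
        have := hl'_mono hy01 hb hy.2
        linarith)
    linarith
  intro x hx
  obtain ⟨hx0, hx1⟩ := hx
  rcases le_total xh x with hxx | hxx
  · -- xh ≤ x
    have hI1 : ∫ z in xh..x, α z ≤ c * (x - xh) := by
      rw [intervalIntegral.integral_of_le hxx, integral_Ioc_eq_integral_Ioo]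
      have hint : IntegrableOn α (Ioo xh x) volume :=
        hαint.mono_set (fun z hz => ⟨le_trans hxh0 hz.1.le, le_trans hz.2.le hx1⟩)
      have hintc : IntegrableOn (fun _ : ℝ => c) (Ioo xh x) volume := by
        refine integrableOn_const ?_
        simp [Real.volume_Ioo]
      calc ∫ z in Ioo xh x, α z ≤ ∫ _z in Ioo xh x, c := by
            apply setIntegral_mono_on hint hintc measurableSet_Ioo
            intro z hz
            exact hright z ⟨hz.1, le_trans hz.2.le hx1⟩
        _ = c * (x - xh) := by
            rw [setIntegral_const]
            simp [Real.volume_Ioo, ENNReal.toReal_ofReal (by linarith : (0:ℝ) ≤ x - xh), max_eq_left (by linarith : (0:ℝ) ≤ x - xh)]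
            ring
    have hsplit := intervalIntegral.integral_add_adjacent_intervals
      (hαii xh x ⟨hxh0, hxh1⟩ ⟨hx0, hx1⟩) (hαii x 1 ⟨hx0, hx1⟩ (by norm_num))
    have hsec : l' (kload κ xh) * (kload κ x - kload κ xh) ≤ l (kload κ x) - l (kload κ xh) :=
      hlow _ _ (hk xh ⟨hxh0, hxh1⟩) (hk x ⟨hx0, hx1⟩) (hkm hxx)
    have heq2 : c * (x - xh) = l' (kload κ xh) * (kload κ x - kload κ xh) := by
      simp only [hcdef, kload]; ring
    simp only [SCrs]
    rw [← hsplit]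
    linarith
  · -- x ≤ xh
    have hI2 : c * (xh - x) ≤ ∫ z in x..xh, α z := by
      rw [intervalIntegral.integral_of_le hxx, integral_Ioc_eq_integral_Ioo]
      have hint : IntegrableOn α (Ioo x xh) volume :=
        hαint.mono_set (fun z hz => ⟨le_trans hx0 hz.1.le, le_trans hz.2.le hxh1⟩)
      have hintc : IntegrableOn (fun _ : ℝ => c) (Ioo x xh) volume := by
        refine integrableOn_const ?_
        simp [Real.volume_Ioo]
      calc c * (xh - x) = ∫ _z in Ioo x xh, c := by
            rw [setIntegral_const]
            simp [Real.volume_Ioo, ENNReal.toReal_ofReal (by linarith : (0:ℝ) ≤ xh - x), max_eq_left (by linarith : (0:ℝ) ≤ xh - x)]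
            ring
        _ ≤ ∫ z in Ioo x xh, α z := by
            apply setIntegral_mono_on hintc hint measurableSet_Ioo
            intro z hz
            exact hleft z ⟨le_trans hx0 hz.1.le, hz.2⟩
    have hsplit := intervalIntegral.integral_add_adjacent_intervals
      (hαii x xh ⟨hx0, hx1⟩ ⟨hxh0, hxh1⟩) (hαii xh 1 ⟨hxh0, hxh1⟩ (by norm_num))
    have hsec : l (kload κ xh) - l (kload κ x) ≤ l' (kload κ xh) * (kload κ xh - kload κ x) :=
      hhigh _ _ (hk x ⟨hx0, hx1⟩) (hk xh ⟨hxh0, hxh1⟩) (hkm hxx)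
    have heq2 : c * (xh - x) = l' (kload κ xh) * (kload κ xh - kload κ x) := by
      simp only [hcdef, kload]; ring
    simp only [SCrs]
    rw [← hsplit]
    linarith
end

section
/- Train model, Case 1 details: Let Z > 1, Δ = 1/Z, ε ∈ (0, 1/2), δ = εΔ². Define l(x) = 0 on [0, ε-δ], l(x) = (Δ/δ)(x - (ε-δ)) on (ε-δ, ε], l(x) = Δ on (ε, 1]. Let t : [0,1] → ℝ≥0 satisfy l(ε) + t(ε) ≥ 1 and define α(x) = l(ε)+t(ε) for x < 1, α(1) = 0. Then ε is an equilibrium in the train model, SC(ε) = εΔ + (1-ε)(l(ε)+t(ε)) ≥ 1-ε, and SC(1) = Δ, so SC(ε)/SC(x*) ≥ (1-ε)/Δ ≥ (1-ε)·Z for any minimizer x* of SC. -/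
open Set MeasureTheory

/-- Train-model social cost: `SC(x) = x·l(x) + ∫_x^1 α(z) dz`. -/
noncomputable def SCtrain (l α : ℝ → ℝ) (x : ℝ) : ℝ := x * l x + ∫ z in x..(1:ℝ), α z

lemma int_const_aux (c : ℝ) (α : ℝ → ℝ) (hα : ∀ x, α x = if x < 1 then c else 0)
    (x : ℝ) (hx : x ≤ 1) : ∫ z in x..(1:ℝ), α z = (1 - x) * c := by
  have h1 : ∀ᵐ (z : ℝ), z ≠ (1:ℝ) := by
    simpa [ae_iff] using Real.volume_singleton (a := (1:ℝ))
  have hcongr : ∫ z in x..(1:ℝ), α z = ∫ z in x..(1:ℝ), (fun _ => c) z := by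
    apply intervalIntegral.integral_congr_ae
    filter_upwards [h1] with z hz hzI
    rw [Set.uIoc_of_le hx] at hzI
    rw [hα]
    rw [if_pos (lt_of_le_of_ne hzI.2 hz)]
  rw [hcongr, intervalIntegral.integral_const, smul_eq_mul]

/-- Train model, Case 1: if `l(ε) + t(ε) ≥ 1`, the constant demand `α = l(ε)+t(ε)`
(on `[0,1)`, zero at `1`) makes `ε` an equilibrium of cost at least `(1-ε)·Z`
times the optimum. -/
theorem train_case_one
    (Z ε : ℝ) (hZ : 1 < Z) (hε : ε ∈ Ioo (0:ℝ) (1/2))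
    (Δ δ : ℝ) (hΔ : Δ = 1 / Z) (hδ : δ = ε * Δ^2)
    (l : ℝ → ℝ) (hl : ∀ x, l x = (Δ/δ) * min (max (x - (ε - δ)) 0) δ)
    (t : ℝ → ℝ) (ht_nonneg : ∀ x, 0 ≤ t x) (ht : 1 ≤ l ε + t ε)
    (α : ℝ → ℝ) (hα : ∀ x, α x = if x < 1 then l ε + t ε else 0) :
    (((l ε + t ε : ℝ) : EReal) ≤ leftLimE α ε ∧
      rightLimE α ε ≤ ((l ε + t ε : ℝ) : EReal)) ∧
    SCtrain l α ε = ε * Δ + (1 - ε) * (l ε + t ε) ∧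
    1 - ε ≤ SCtrain l α ε ∧
    SCtrain l α 1 = Δ ∧
    ∀ xstar ∈ Icc (0:ℝ) 1, (∀ x ∈ Icc (0:ℝ) 1, SCtrain l α xstar ≤ SCtrain l α x) →
      SCtrain l α ε / SCtrain l α xstar ≥ (1 - ε) / Δ ∧
      (1 - ε) / Δ ≥ (1 - ε) * Z := by
  obtain ⟨hε0, hε2⟩ := hε
  have hZ0 : 0 < Z := lt_trans one_pos hZ
  have hΔ0 : 0 < Δ := by rw [hΔ]; positivity
  have hδ0 : 0 < δ := by rw [hδ]; positivity
  set c := l ε + t ε with hc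
  have hc0 : 0 < c := lt_of_lt_of_le one_pos ht
  have hε1 : ε < 1 := lt_trans hε2 (by norm_num)
  have hlε : l ε = Δ := by
    rw [hl]
    have : ε - (ε - δ) = δ := by ring
    rw [this, max_eq_left hδ0.le, min_self, div_mul_cancel₀ _ hδ0.ne']
  have hl1 : l 1 = Δ := by
    rw [hl]
    have h1 : max (1 - (ε - δ)) 0 = 1 - (ε - δ) := max_eq_left (by nlinarith)
    have h2 : min (1 - (ε - δ)) δ = δ := min_eq_right (by nlinarith)
    rw [h1, h2, div_mul_cancel₀ _ hδ0.ne']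
  have hint : ∀ x : ℝ, x ≤ 1 → ∫ z in x..(1:ℝ), α z = (1 - x) * c :=
    int_const_aux c α hα
  have hSCε : SCtrain l α ε = ε * Δ + (1 - ε) * c := by
    rw [SCtrain, hint ε hε1.le, hlε]
  have hSC1 : SCtrain l α 1 = Δ := by
    rw [SCtrain, hint 1 le_rfl, hl1]; ring
  have hSCε_ge : 1 - ε ≤ SCtrain l α ε := by
    rw [hSCε]
    nlinarith
  refine ⟨⟨?_, ?_⟩, hSCε, hSCε_ge, hSC1, ?_⟩
  · refine le_iInf₂ fun s hs => ?_
    rw [hα, if_pos (lt_trans hs.2 hε1)]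
  · refine iSup₂_le fun s hs => ?_
    rw [hα]
    split_ifs
    · exact le_rfl
    · exact_mod_cast hc0.le
  · intro xstar hxstar hmin
    have hSCx_le : SCtrain l α xstar ≤ Δ := by
      have := hmin 1 (by constructor <;> norm_num)
      rwa [hSC1] at this
    have hSCx_pos : 0 < SCtrain l α xstar := by
      rw [SCtrain, hint xstar hxstar.2]
      have hlx : 0 ≤ l xstar := by
        rw [hl]
        have : 0 ≤ min (max (xstar - (ε - δ)) 0) δ := le_min (le_max_right _ _) hδ0.le
        positivity
      rcases eq_or_lt_of_le hxstar.2 with h | h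
      · rw [h, hl1] at *
        simpa using by nlinarith
      · nlinarith [mul_nonneg hxstar.1 hlx]
    constructor
    · exact div_le_div₀ (by linarith) hSCε_ge hSCx_pos hSCx_le
    · rw [hΔ, div_div_eq_mul_div, div_one]
end

section
/- Train model, Case 2 details: Let Z > 1, Δ = 1/Z, ε ∈ (0, 1/2), δ = εΔ². Define l as in Case 1 (l = 0 on [0,ε-δ], linearly rising to Δ on (ε-δ,ε], constant Δ after). Let t satisfy 0 ≤ l(ε) + t(ε) < 1 and define α(x) = l(ε)+t(ε) for x ≤ ε, α(x) = 0 for x > ε. Then ε is an equilibrium in the train model, SC(ε) = ε·Δ, and SC(ε-δ) = δ·(l(ε)+t(ε)) ≤ δ = εΔ², so SC(ε)/SC(x*) ≥ εΔ/(εΔ²) = Z for any minimizer x* (when l(ε)+t(ε) > 0; if it equals 0 the ratio is infinite since SC(ε) > 0 and SC(ε-δ) = 0). -/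
open Set MeasureTheory

/-- Train model, Case 2: if `l(ε) + t(ε) < 1`, the demand `α = l(ε)+t(ε)` on
`[0,ε]` and `0` after makes `ε` an equilibrium of cost at least `Z` times the
optimum (infinite ratio if `l(ε)+t(ε) = 0`). -/
theorem train_case_two
    (Z ε : ℝ) (hZ : 1 < Z) (hε : ε ∈ Ioo (0:ℝ) (1/2))
    (Δ δ : ℝ) (hΔ : Δ = 1 / Z) (hδ : δ = ε * Δ^2)
    (l : ℝ → ℝ) (hl : ∀ x, l x = (Δ/δ) * min (max (x - (ε - δ)) 0) δ)
    (t : ℝ → ℝ) (ht_nonneg : ∀ x, 0 ≤ t x) (ht : l ε + t ε < 1)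
    (α : ℝ → ℝ) (hα : ∀ x, α x = if x ≤ ε then l ε + t ε else 0) :
    (((l ε + t ε : ℝ) : EReal) ≤ leftLimE α ε ∧
      rightLimE α ε ≤ ((l ε + t ε : ℝ) : EReal)) ∧
    SCtrain l α ε = ε * Δ ∧
    SCtrain l α (ε - δ) = δ * (l ε + t ε) ∧
    SCtrain l α (ε - δ) ≤ δ ∧
    (0 < l ε + t ε →
      ∀ xstar ∈ Icc (0:ℝ) 1, (∀ x ∈ Icc (0:ℝ) 1, SCtrain l α xstar ≤ SCtrain l α x) →
        SCtrain l α ε / SCtrain l α xstar ≥ Z) ∧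
    (l ε + t ε = 0 → SCtrain l α (ε - δ) = 0 ∧ 0 < SCtrain l α ε) := by
  obtain ⟨hε0, hε1⟩ := hε
  have hZ0 : (0:ℝ) < Z := lt_trans one_pos hZ
  have hΔ0 : 0 < Δ := by rw [hΔ]; positivity
  have hΔ1 : Δ < 1 := by rw [hΔ]; rw [div_lt_one hZ0]; exact hZ
  have hδ0 : 0 < δ := by rw [hδ]; positivity
  have hδε : δ < ε := by
    rw [hδ]
    have h2 : Δ^2 < 1 := by nlinarith
    nlinarith
  have hε1' : ε < 1 := lt_trans hε1 (by norm_num)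
  have hlε : l ε = Δ := by
    rw [hl]
    have h1 : ε - (ε - δ) = δ := by ring
    rw [h1, max_eq_left hδ0.le, min_self, div_mul_cancel₀ _ hδ0.ne']
  set c := l ε + t ε with hc
  have hc0 : 0 ≤ c := by rw [hc, hlε]; have := ht_nonneg ε; linarith
  have hc1 : c < 1 := ht
  -- integral computations
  have hint1 : ∀ a : ℝ, a ≤ ε → (∫ z in a..ε, α z) = c * (ε - a) := by
    intro a ha
    have : (∫ z in a..ε, α z) = ∫ _ in a..ε, c := by
      apply intervalIntegral.integral_congr_ae
      filter_upwards with z hz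
      rw [Set.uIoc_of_le ha] at hz
      rw [hα]
      simp [hz.2]
    rw [this, intervalIntegral.integral_const, smul_eq_mul, mul_comm]
  have hint2 : ∀ a : ℝ, ε ≤ a → (∫ z in a..(1:ℝ), α z) = 0 := by
    intro a ha
    rcases le_or_gt a 1 with ha1 | ha1
    · have : (∫ z in a..(1:ℝ), α z) = ∫ _ in a..(1:ℝ), (0:ℝ) := by
        apply intervalIntegral.integral_congr_ae
        filter_upwards with z hz
        rw [Set.uIoc_of_le ha1] at hz
        rw [hα]
        simp [not_le.mpr (lt_of_le_of_lt ha hz.1)]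
      rw [this, intervalIntegral.integral_const, smul_zero]
    · have : (∫ z in a..(1:ℝ), α z) = ∫ _ in a..(1:ℝ), (0:ℝ) := by
        apply intervalIntegral.integral_congr_ae
        filter_upwards with z hz
        rw [Set.uIoc_of_ge ha1.le] at hz
        rw [hα, if_neg (by linarith [hz.1])]
      rw [this, intervalIntegral.integral_const, smul_zero]
  have hαeq : α = (Set.Iic ε).indicator (fun _ => c) := by
    funext x
    simp [hα x, Set.indicator_apply, Set.mem_Iic]
  have hαint : ∀ a b : ℝ, IntervalIntegrable α volume a b := by
    intro a b
    rw [intervalIntegrable_iff, hαeq]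
    exact (integrableOn_const (hs := measure_Ioc_lt_top.ne)).indicator measurableSet_Iic
  have hint3 : ∀ a : ℝ, a ≤ ε → (∫ z in a..(1:ℝ), α z) = c * (ε - a) := by
    intro a ha
    have := intervalIntegral.integral_add_adjacent_intervals (hαint a ε) (hαint ε 1)
    rw [← this, hint1 a ha, hint2 ε le_rfl, add_zero]
  -- SC values
  have hSCε : SCtrain l α ε = ε * Δ := by
    unfold SCtrain
    rw [hint2 ε le_rfl, hlε, add_zero]
  have hlεδ : l (ε - δ) = 0 := by
    rw [hl]
    simp
    exact Or.inr hδ0.le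
  have hSCεδ : SCtrain l α (ε - δ) = δ * c := by
    unfold SCtrain
    rw [hint3 (ε - δ) (by linarith), hlεδ, mul_zero, zero_add,
      show ε - (ε - δ) = δ by ring, mul_comm]
  refine ⟨⟨?_, ?_⟩, hSCε, hSCεδ, ?_, ?_, ?_⟩
  · -- left limit
    apply le_iInf₂
    intro z hz
    rw [hα, if_pos hz.2.le]
  · -- right limit
    apply iSup₂_le
    intro z hz
    rw [hα, if_neg (not_le.mpr hz.1)]
    exact_mod_cast hc0
  · rw [hSCεδ]
    nlinarith
  · -- ratio
    intro hcpos xstar hxstar hmin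
    have hSCx_pos : 0 < SCtrain l α xstar := by
      obtain ⟨hx0, hx1⟩ := hxstar
      rcases le_or_gt xstar ε with hxε | hxε
      · unfold SCtrain
        rw [hint3 xstar hxε]
        have hl0 : 0 ≤ l xstar := by
          rw [hl]
          have : 0 ≤ min (max (xstar - (ε - δ)) 0) δ := le_min (le_max_right _ _) hδ0.le
          positivity
        rcases eq_or_lt_of_le hxε with h | h
        · have : l xstar = Δ := h ▸ hlε
          rw [this]
          nlinarith
        · nlinarith [mul_nonneg hx0 hl0]
      · unfold SCtrain
        rw [hint2 xstar hxε.le]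
        have : l xstar = Δ := by
          rw [hl]
          have h1 : δ ≤ xstar - (ε - δ) := by linarith
          rw [max_eq_left (by linarith), min_eq_right h1, div_mul_cancel₀ _ hδ0.ne']
        rw [this, add_zero]
        exact mul_pos (lt_trans hε0 hxε) hΔ0
    have hle : SCtrain l α xstar ≤ δ * c := by
      rw [← hSCεδ]
      exact hmin (ε - δ) ⟨by linarith, by linarith⟩
    rw [hSCε, ge_iff_le, le_div_iff₀ hSCx_pos]
    have hZΔ : Z * Δ = 1 := by rw [hΔ]; field_simp
    calc Z * SCtrain l α xstar ≤ Z * (δ * c) := by nlinarith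
      _ ≤ Z * δ := by nlinarith
      _ = ε * Δ := by rw [hδ]; nlinarith
  · intro h0
    refine ⟨by rw [hSCεδ, h0, mul_zero], by rw [hSCε]; positivity⟩
end
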